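/- Let P and Q be integers and let U : ℕ → ℤ be the Lucas sequence defined by U(0) = 0, U(1) = 1, and U(n) = P·U(n-1) − Q·U(n-2) for n ≥ 2. Set Δ = P² − 4Q. Then for every prime p not dividing 2QΔ, p divides U(p − (Δ/p)), where (Δ/p) is the Legendre symbol, and p − (Δ/p) is interpreted as a natural number. -/

import Mathlib

/-- Two sequences satisfying the same second-order linear recurrence with the
same initial values agree everywhere. -/
private lemma lucas_aux {S : Type*} [CommRing S] (c d : S) (x y : ℕ → S)
    (h0 : x 0 = y 0) (h1 : x 1 = y 1)
    (hx : ∀ n, x (n + 2) = c * x (n + 1) - d * x n)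
    (hy : ∀ n, y (n + 2) = c * y (n + 1) - d * y n) : ∀ n, x n = y n := by
  have key : ∀ n, x n = y n ∧ x (n + 1) = y (n + 1) := by
    intro n
    induction n with
    | zero => exact ⟨h0, h1⟩
    | succ k ih => exact ⟨ih.2, by rw [hx, hy, ih.1, ih.2]⟩
  exact fun n => (key n).1

/-- The Lucas pseudoprimality fact: if `U` is the Lucas sequence with parameters
`P, Q`, `Δ = P² - 4Q`, and `p` is a prime not dividing `2 Q Δ`, then
`p ∣ U (p - (Δ/p))`. -/
theorem lucas_divisibility (P Q : ℤ) (U : ℕ → ℤ)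
    (hU0 : U 0 = 0) (hU1 : U 1 = 1)
    (hUrec : ∀ n : ℕ, 2 ≤ n → U n = P * U (n - 1) - Q * U (n - 2))
    (Δ : ℤ) (hΔ : Δ = P ^ 2 - 4 * Q)
    (p : ℕ) (hp : p.Prime) (hdvd : ¬ (p : ℤ) ∣ 2 * Q * Δ) :
    (p : ℤ) ∣ U (((p : ℤ) - @legendreSym p ⟨hp⟩ Δ).toNat) := by
  haveI : Fact p.Prime := ⟨hp⟩
  -- basic non-divisibility facts
  have hp2 : ¬ (p : ℤ) ∣ 2 := fun h => hdvd (h.trans ⟨Q * Δ, by ring⟩)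
  have hpQ : ¬ (p : ℤ) ∣ Q := fun h => hdvd (h.trans ⟨2 * Δ, by ring⟩)
  have hpΔ : ¬ (p : ℤ) ∣ Δ := fun h => hdvd (h.trans ⟨2 * Q, by ring⟩)
  have hpne2 : p ≠ 2 := by
    rintro rfl; exact hp2 (by norm_num)
  have hp3 : 3 ≤ p := by
    have := hp.two_le
    rcases Nat.lt_or_ge p 3 with h | h
    · interval_cases p <;> simp_all
    · exact h
  have hpodd : p % 2 = 1 := Nat.odd_iff.mp (hp.odd_of_ne_two hpne2)
  -- reductions modulo p
  have hQ0 : (Q : ZMod p) ≠ 0 := fun h => hpQ ((ZMod.intCast_zmod_eq_zero_iff_dvd Q p).mp h)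
  have hΔ0 : (Δ : ZMod p) ≠ 0 := fun h => hpΔ ((ZMod.intCast_zmod_eq_zero_iff_dvd Δ p).mp h)
  have h20 : (2 : ZMod p) ≠ 0 := by
    intro h
    exact hp2 ((ZMod.intCast_zmod_eq_zero_iff_dvd 2 p).mp (by push_cast; exact_mod_cast h))
  -- the quadratic ring S = (ZMod p)[X]/(X² - P X + Q)
  set g : Polynomial (ZMod p) :=
    Polynomial.X ^ 2 - Polynomial.C ((P : ZMod p)) * Polynomial.X
      + Polynomial.C ((Q : ZMod p)) with hg
  have hgmonic : g.Monic := by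
    have h1 : (Polynomial.C (-(P : ZMod p)) * Polynomial.X
        + Polynomial.C ((Q : ZMod p))).degree < ((2 : ℕ) : WithBot ℕ) :=
      lt_of_le_of_lt Polynomial.degree_linear_le (by exact_mod_cast one_lt_two)
    have h2 := Polynomial.monic_X_pow_add (n := 2) h1
    convert h2 using 1
    rw [hg, map_neg]; ring
  have hgdeg : g.degree = 2 := by
    rw [hg]
    compute_degree!
  let S := AdjoinRoot g
  let α : S := AdjoinRoot.root g
  have hinj : Function.Injective (AdjoinRoot.of g) := by
    intro a b h
    have h2 : AdjoinRoot.mk g (Polynomial.C a) = AdjoinRoot.mk g (Polynomial.C b) := by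
      rwa [AdjoinRoot.mk_C, AdjoinRoot.mk_C]
    have h3 := congrArg (AdjoinRoot.modByMonicHom hgmonic) h2
    rw [AdjoinRoot.modByMonicHom_mk, AdjoinRoot.modByMonicHom_mk,
      (Polynomial.modByMonic_eq_self_iff hgmonic).mpr, 
      (Polynomial.modByMonic_eq_self_iff hgmonic).mpr] at h3
    · exact Polynomial.C_injective h3
    · rw [hgdeg]; exact lt_of_le_of_lt Polynomial.degree_C_le (by norm_num)
    · rw [hgdeg]; exact lt_of_le_of_lt Polynomial.degree_C_le (by norm_num)
  haveI hchar : CharP S p := by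
    have : Function.Injective (algebraMap (ZMod p) S) := by
      rwa [AdjoinRoot.algebraMap_eq]
    exact charP_of_injective_algebraMap this p
  -- the root relation
  have hcast : ∀ m : ℤ, AdjoinRoot.of g ((m : ZMod p)) = ((m : S)) := fun m =>
    map_intCast ((AdjoinRoot.of g)) m
  have hα2 : α ^ 2 = (P : S) * α - (Q : S) := by
    have h0 := AdjoinRoot.eval₂_root g
    rw [hg] at h0
    simp only [Polynomial.eval₂_add, Polynomial.eval₂_sub, Polynomial.eval₂_mul,
      Polynomial.eval₂_pow, Polynomial.eval₂_X, Polynomial.eval₂_C] at h0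
    rw [hcast P, hcast Q] at h0
    have : α ^ 2 - (P : S) * α + (Q : S) = 0 := h0
    linear_combination this
  set β : S := (P : S) - α with hβ
  have hsum : α + β = (P : S) := by rw [hβ]; ring
  have hprod : α * β = (Q : S) := by rw [hβ]; linear_combination -hα2
  -- the two closed-form identities
  have hUid : ∀ n : ℕ, ((U n : S)) * (α - β) = α ^ n - β ^ n := by
    apply lucas_aux ((P : S)) ((Q : S))
    · simp [hU0]
    · simp [hU1]
    · intro n
      have hr := hUrec (n + 2) (by omega)
      have e1 : n + 2 - 1 = n + 1 := by omega
      have e2 : n + 2 - 2 = n := by omega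
      rw [e1, e2] at hr
      rw [hr]; push_cast [S]; ring
    · intro n
      rw [← hsum, ← hprod]; ring
  have hVid : ∀ n : ℕ, ((2 * U (n + 1) - P * U n : ℤ) : S) = α ^ n + β ^ n := by
    apply lucas_aux ((P : S)) ((Q : S))
    · rw [show (0:ℕ)+1 = 1 from rfl, hU0, hU1]; push_cast; ring
    · have h2 : U 2 = P * U 1 - Q * U 0 := hUrec 2 (le_refl 2)
      rw [show (1:ℕ)+1 = 2 from rfl, h2, hU0, hU1]
      push_cast
      linear_combination -hsum
    · intro n
      have hr2 := hUrec (n + 2) (by omega)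
      have hr3 := hUrec (n + 3) (by omega)
      have e1 : n + 2 - 1 = n + 1 := by omega
      have e2 : n + 2 - 2 = n := by omega
      have e3 : n + 3 - 1 = n + 2 := by omega
      have e4 : n + 3 - 2 = n + 1 := by omega
      rw [e1, e2] at hr2
      rw [e3, e4] at hr3
      rw [hr3, hr2]; push_cast [S]; ring
    · intro n
      rw [← hsum, ← hprod]; ring
  -- Frobenius computations
  set ε : ℤ := @legendreSym p ⟨hp⟩ Δ with hε
  have hdsq : (α - β) ^ 2 = (Δ : S) := by
    rw [hβ, hΔ]; push_cast [S]; linear_combination 4 * hα2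
  have heuler : ((Δ : ZMod p)) ^ (p / 2) = ((ε : ZMod p)) := by
    rw [hε, legendreSym.eq_pow]
  have hαp : α ^ p - β ^ p = (ε : S) * (α - β) := by
    have h1 : (α - β) ^ p = α ^ p - β ^ p := sub_pow_char (x := α) (y := β)
    have h2 : p = 2 * (p / 2) + 1 := by omega
    have h3 : (α - β) ^ p = ((α - β) ^ 2) ^ (p / 2) * (α - β) := by
      rw [← pow_mul, ← pow_succ, ← h2]
    have h4 : ((Δ : S)) ^ (p / 2) = (ε : S) := by
      rw [← hcast Δ, ← hcast ε, ← map_pow, heuler]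
    rw [← h1, h3, hdsq, h4]
  have hβp : α ^ p + β ^ p = (P : S) := by
    have h1 : (α + β) ^ p = α ^ p + β ^ p := add_pow_char (x := α) (y := β) (p := p)
    have h2 : ((P : S)) ^ p = (P : S) := by
      rw [← hcast P, ← map_pow, ZMod.pow_card]
    rw [← h1, hsum, h2]
  -- deduce congruences in ZMod p via injectivity
  have hUp : ((U p : ZMod p)) = ((ε : ZMod p)) := by
    have h1 : ((U p : S)) * (α - β) = (ε : S) * (α - β) := by rw [hUid p, hαp]
    have h2 : ((U p : S)) * (Δ : S) = (ε : S) * (Δ : S) := by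
      have := congrArg (· * (α - β)) h1
      calc ((U p : S)) * (Δ : S) = ((U p : S)) * (α - β) * (α - β) := by
            rw [mul_assoc, ← pow_two, hdsq]
        _ = (ε : S) * (α - β) * (α - β) := this
        _ = (ε : S) * (Δ : S) := by rw [mul_assoc, ← pow_two, hdsq]
    have h3 : AdjoinRoot.of g (((U p : ZMod p)) * ((Δ : ZMod p)))
        = AdjoinRoot.of g (((ε : ZMod p)) * ((Δ : ZMod p))) := by
      rw [map_mul, map_mul, hcast, hcast, hcast]
      exact h2
    have h4 := hinj h3
    exact mul_right_cancel₀ hΔ0 h4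
  have hVp : ((2 * U (p + 1) - P * U p : ℤ) : ZMod p) = ((P : ZMod p)) := by
    have h1 : ((2 * U (p + 1) - P * U p : ℤ) : S) = (P : S) := by rw [hVid p, hβp]
    have h3 : AdjoinRoot.of g (((2 * U (p + 1) - P * U p : ℤ) : ZMod p))
        = AdjoinRoot.of g (((P : ZMod p))) := by
      rw [hcast, hcast]; exact h1
    exact hinj h3
  -- finish by cases on the Legendre symbol
  have hε1 : ε = 1 ∨ ε = -1 := by
    rw [hε]; exact legendreSym.eq_one_or_neg_one p hΔ0
  rcases hε1 with h1 | h1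
  · -- ε = 1 : show p ∣ U (p - 1)
    have hidx : ((p : ℤ) - ε).toNat = p - 1 := by rw [h1]; omega
    rw [hidx]
    rw [← ZMod.intCast_zmod_eq_zero_iff_dvd]
    have hr := hUrec (p + 1) (by omega)
    have e1 : p + 1 - 1 = p := by omega
    have e2 : p + 1 - 2 = p - 1 := by omega
    rw [e1, e2] at hr
    have hUp1 : ((U p : ZMod p)) = 1 := by rw [hUp, h1]; norm_num
    have key : (2 : ZMod p) * (Q : ZMod p) * ((U (p - 1) : ZMod p)) = 0 := by
      have hv := hVp
      rw [hr] at hv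
      push_cast at hv
      rw [hUp1] at hv
      linear_combination -hv
    rcases mul_eq_zero.mp key with h | h
    · exact absurd (mul_eq_zero.mp h) (by push_neg; exact ⟨h20, hQ0⟩)
    · exact h
  · -- ε = -1 : show p ∣ U (p + 1)
    have hidx : ((p : ℤ) - ε).toNat = p + 1 := by rw [h1]; omega
    rw [hidx]
    rw [← ZMod.intCast_zmod_eq_zero_iff_dvd]
    have hUp1 : ((U p : ZMod p)) = -1 := by rw [hUp, h1]; norm_num
    have key : (2 : ZMod p) * ((U (p + 1) : ZMod p)) = 0 := by
      have hv := hVp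
      push_cast at hv
      rw [hUp1] at hv
      linear_combination hv
    rcases mul_eq_zero.mp key with h | h
    · exact absurd h h20
    · exact h
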